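/- Suppose S, E, I_1, …, I_N : ℝ → ℝ are differentiable and satisfy the SEIR system with N parallel infectious stages at time t. Then for every real Z, the function U_Z(t) = E(t) + Z Σ_{i=1}^N (β_i/γ_i) I_i(t) is differentiable at t with U_Z'(t) = (S(t) − Z) Σ_{i=1}^N β_i I_i(t) − σ E(t) (1 − Z/S*), where S* = (Σ_i x_i β_i/γ_i)^{-1}. In particular, for Z = S*, U_{S*}'(t) = (S(t) − S*) Σ_i β_i I_i(t). -/

import Mathlib

/-- derivative of the Lyapunov-type function
`U_Z = E + Z Σᵢ (βᵢ/γᵢ) Iᵢ` along solutions of the SEIR model with `N` parallel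
infectious stages, and its specialization at `Z = S*`. -/
theorem stmt_4
    (N : ℕ) [NeZero N]
    (σ : ℝ) (hσ : 0 < σ)
    (γ β x : Fin N → ℝ)
    (hγ : ∀ i, 0 < γ i) (hβ : ∀ i, 0 < β i) (hx : ∀ i, 0 < x i)
    (hxsum : ∑ i, x i = 1)
    (Sstar : ℝ) (hSstar : Sstar = (∑ i, x i * β i / γ i)⁻¹)
    (S E : ℝ → ℝ) (I : Fin N → ℝ → ℝ) (t : ℝ)
    (hS : HasDerivAt S (-(∑ i, β i * I i t) * S t) t)
    (hE : HasDerivAt E ((∑ i, β i * I i t) * S t - σ * E t) t)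
    (hI : ∀ i, HasDerivAt (I i) (x i * σ * E t - γ i * I i t) t) :
    (∀ Z : ℝ, HasDerivAt (fun s => E s + Z * ∑ i, β i / γ i * I i s)
      ((S t - Z) * (∑ i, β i * I i t) - σ * E t * (1 - Z / Sstar)) t) ∧
    HasDerivAt (fun s => E s + Sstar * ∑ i, β i / γ i * I i s)
      ((S t - Sstar) * (∑ i, β i * I i t)) t := by
  have hsumpos : 0 < ∑ i, x i * β i / γ i := by
    apply Finset.sum_pos
    · intro i _
      exact div_pos (mul_pos (hx i) (hβ i)) (hγ i)
    · exact Finset.univ_nonempty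
  have hsumne : (∑ i, x i * β i / γ i) ≠ 0 := ne_of_gt hsumpos
  have hSstarne : Sstar ≠ 0 := by
    rw [hSstar]; exact inv_ne_zero hsumne
  have key : ∀ Z : ℝ, HasDerivAt (fun s => E s + Z * ∑ i, β i / γ i * I i s)
      ((S t - Z) * (∑ i, β i * I i t) - σ * E t * (1 - Z / Sstar)) t := by
    intro Z
    have hsum : HasDerivAt (fun s => ∑ i, β i / γ i * I i s)
        (∑ i, β i / γ i * (x i * σ * E t - γ i * I i t)) t := by
      apply HasDerivAt.fun_sum
      intro i _
      exact (hI i).const_mul _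
    have := hE.fun_add ((hsum.const_mul Z))
    refine this.congr_deriv ?_
    have hZS : Z / Sstar = Z * ∑ i, x i * β i / γ i := by
      rw [hSstar, div_inv_eq_mul]
    rw [hZS]
    have expand : ∑ i, β i / γ i * (x i * σ * E t - γ i * I i t)
        = σ * E t * (∑ i, x i * β i / γ i) - ∑ i, β i * I i t := by
      rw [Finset.mul_sum, ← Finset.sum_sub_distrib]
      apply Finset.sum_congr rfl
      intro i _
      have hγi := (hγ i).ne'
      field_simp
    rw [expand]
    ring
  refine ⟨key, ?_⟩
  have := key Sstar
  rw [div_self hSstarne] at this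
  simpa using this
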